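/- Let A : D(A) ⊆ E → F be a closed linear operator between real Banach spaces with dense domain D(A), and let A* : D(A*) ⊆ F* → E* be its adjoint. Then the image A(D(A)) is closed in F if and only if there exists a constant C > 0 such that for every e* ∈ A*(D(A*)) there exists f* ∈ D(A*) with A* f* = e* and ‖f*‖_{F*} ≤ C ‖e*‖_{E*}. -/

import Mathlib

namespace Stmt2

variable {E F : Type*} [NormedAddCommGroup E] [NormedSpace ℝ E]
  [NormedAddCommGroup F] [NormedSpace ℝ F]

/-- `g ∈ E*` is the value `A* f*` of the adjoint of `A` at `f* ∈ F*`: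
`g` is the (necessarily unique, by density of `D`) continuous extension to `E` of the
functional `e ↦ f* (A e)` on `D`.  The existence of such a continuous extension is
equivalent to the defining condition `|f*(A e)| ≤ C ‖e‖` of `D(A*)`. -/
def IsAdjointPair (D : Submodule ℝ E) (A : D →ₗ[ℝ] F)
    (fstar : F →L[ℝ] ℝ) (g : E →L[ℝ] ℝ) : Prop :=
  ∀ e : D, g e = fstar (A e)

/-- Forward direction: closed range implies bounded solvability for the adjoint. -/
theorem forward_dir [CompleteSpace E] [CompleteSpace F]
    (D : Submodule ℝ E) (A : D →ₗ[ℝ] F)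
    (hclosed : IsClosed {p : E × F | ∃ e : D, (e : E) = p.1 ∧ A e = p.2})
    (hR : IsClosed (Set.range A)) :
    ∃ C : ℝ, 0 < C ∧ ∀ estar : E →L[ℝ] ℝ,
        (∃ fstar : F →L[ℝ] ℝ, IsAdjointPair D A fstar estar) →
        ∃ fstar : F →L[ℝ] ℝ, IsAdjointPair D A fstar estar ∧ ‖fstar‖ ≤ C * ‖estar‖ := by
  classical
  set G : Submodule ℝ (E × F) := LinearMap.range (D.subtype.prod A) with hG
  have hGset : (G : Set (E × F)) = {p : E × F | ∃ e : D, (e : E) = p.1 ∧ A e = p.2} := by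
    ext p
    simp [hG, LinearMap.mem_range, LinearMap.prod_apply, Prod.ext_iff]
  haveI : CompleteSpace G := by
    have : IsClosed (G : Set (E × F)) := hGset ▸ hclosed
    exact this.completeSpace_coe
  set R' : Submodule ℝ F := LinearMap.range A with hR'
  have hR'set : (R' : Set F) = Set.range A := LinearMap.coe_range A
  haveI : CompleteSpace R' := by
    have : IsClosed (R' : Set F) := hR'set ▸ hR
    exact this.completeSpace_coe
  -- The bounded operator from the graph onto the range.
  have hmem : ∀ g : G, (g : E × F).2 ∈ R' := by
    rintro ⟨g, hg⟩
    obtain ⟨e, he⟩ := hg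
    exact ⟨e, congrArg Prod.snd he⟩
  set T₀ : G →ₗ[ℝ] R' :=
    LinearMap.codRestrict R' ((LinearMap.snd ℝ E F).comp G.subtype) hmem with hT₀
  have hT₀bound : ∀ x : G, ‖T₀ x‖ ≤ 1 * ‖x‖ := by
    intro x
    have : ‖T₀ x‖ = ‖(x : E × F).2‖ := rfl
    rw [this, one_mul]
    exact (norm_snd_le (x : E × F)).trans (le_of_eq rfl)
  set T : G →L[ℝ] R' := T₀.mkContinuous 1 hT₀bound with hT
  have hTsurj : Function.Surjective T := by
    rintro ⟨y, hy⟩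
    obtain ⟨e, he⟩ := hy
    refine ⟨⟨((e : E), A e), ⟨e, rfl⟩⟩, ?_⟩
    exact Subtype.ext he
  obtain ⟨c, hc, hpre⟩ := T.exists_preimage_norm_le hTsurj
  refine ⟨c, hc, ?_⟩
  rintro estar ⟨fstar, hadj⟩
  -- the functional fstar restricted to the range, with improved norm bound
  set φ : R' →L[ℝ] ℝ := fstar.comp R'.subtypeL with hφ
  have hφbound : ∀ y : R', ‖φ y‖ ≤ c * ‖estar‖ * ‖y‖ := by
    intro y
    obtain ⟨x, hx, hxn⟩ := hpre y
    obtain ⟨e, he⟩ := x.2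
    have he1 : (e : E) = (x : E × F).1 := congrArg Prod.fst he
    have he2 : A e = (x : E × F).2 := congrArg Prod.snd he
    have hxy : (x : E × F).2 = (y : F) := congrArg Subtype.val hx
    have hφy : φ y = estar e := by
      have : φ y = fstar (y : F) := rfl
      rw [this, ← hxy, ← he2, ← hadj e]
    rw [hφy]
    calc ‖estar e‖ ≤ ‖estar‖ * ‖(e : E)‖ := estar.le_opNorm _
      _ ≤ ‖estar‖ * ‖x‖ := by
          gcongr
          rw [he1]
          exact norm_fst_le (x : E × F)
      _ ≤ ‖estar‖ * (c * ‖y‖) := by gcongr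
      _ = c * ‖estar‖ * ‖y‖ := by ring
  have hφnorm : ‖φ‖ ≤ c * ‖estar‖ :=
    φ.opNorm_le_bound (by positivity) hφbound
  obtain ⟨g, hg, hgnorm⟩ := exists_extension_norm_eq R' φ
  refine ⟨g, ?_, ?_⟩
  · intro e
    have hmem : A e ∈ R' := ⟨e, rfl⟩
    have : g (A e) = φ ⟨A e, hmem⟩ := hg ⟨A e, hmem⟩
    rw [this]
    have : φ ⟨A e, hmem⟩ = fstar (A e) := rfl
    rw [this, hadj e]
  · rw [hgnorm]; exact hφnorm


/-- Key approximation lemma for the backward direction. -/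
theorem approx [CompleteSpace E]
    (D : Submodule ℝ E) (hD : Dense (D : Set E)) (A : D →ₗ[ℝ] F)
    {C : ℝ} (hC : 0 < C)
    (hsolv : ∀ estar : E →L[ℝ] ℝ,
        (∃ fstar : F →L[ℝ] ℝ, IsAdjointPair D A fstar estar) →
        ∃ fstar : F →L[ℝ] ℝ, IsAdjointPair D A fstar estar ∧ ‖fstar‖ ≤ C * ‖estar‖)
    {y : F} (hy : y ∈ closure (Set.range A)) {ε : ℝ} (hε : 0 < ε) :
    ∃ e : D, ‖(e : E)‖ ≤ C * ‖y‖ ∧ ‖y - A e‖ < ε := by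
  classical
  rcases eq_or_ne y 0 with rfl | hy0
  · exact ⟨0, by simp, by simpa using hε⟩
  have hyn : 0 < ‖y‖ := norm_pos_iff.mpr hy0
  set M : ℝ := C * ‖y‖ with hM
  have hMpos : 0 < M := mul_pos hC hyn
  set S : Set D := {e : D | ‖(e : E)‖ ≤ M} with hS
  set K : Set F := closure (A '' S) with hK
  -- main claim: y ∈ K
  have hyK : y ∈ K := by
    by_contra hyK
    have hKconv : Convex ℝ K := by
      refine Convex.closure ?_
      refine Convex.is_linear_image ?_ ⟨A.map_add, A.map_smul⟩
      intro a ha b hb s t hs ht hst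
      have : ‖((s • a + t • b : D) : E)‖ ≤ s * M + t * M := by
        push_cast
        refine (norm_add_le _ _).trans ?_
        rw [norm_smul, norm_smul, Real.norm_of_nonneg hs, Real.norm_of_nonneg ht]
        gcongr
        · exact ha
        · exact hb
      simpa [hS, ← add_mul, hst] using this
    obtain ⟨f, u, hfK, hfy⟩ := geometric_hahn_banach_closed_point hKconv isClosed_closure hyK
    have hu : 0 < u := by
      have h0 : (0 : F) ∈ K := subset_closure ⟨0, by simp [hS, hMpos.le], by simp⟩
      simpa using hfK 0 h0
    -- |f (A e)| ≤ u for e ∈ S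
    have habs : ∀ e : D, ‖(e : E)‖ ≤ M → |f (A e)| ≤ u := by
      intro e he
      have h1 : f (A e) < u := hfK _ (subset_closure ⟨e, he, rfl⟩)
      have h2 : f (A (-e)) < u := hfK _ (subset_closure ⟨-e, by simpa [hS] using he, rfl⟩)
      rw [map_neg, map_neg] at h2
      rw [abs_le]
      constructor <;> linarith
    -- scaling: |f (A e)| ≤ (u/M) * ‖e‖ for all e
    have hbound : ∀ e : D, ‖f (A e)‖ ≤ u / M * ‖(e : E)‖ := by
      intro e
      rcases eq_or_ne e 0 with rfl | he0
      · simp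
      · have hen : 0 < ‖(e : E)‖ := by
          simpa [norm_pos_iff, Submodule.coe_eq_zero] using he0
        set t : ℝ := M / ‖(e : E)‖ with ht
        have htpos : 0 < t := div_pos hMpos hen
        have hte : ‖((t • e : D) : E)‖ ≤ M := by
          push_cast
          rw [norm_smul, Real.norm_of_nonneg htpos.le, ht, div_mul_cancel₀ _ hen.ne']
        have := habs (t • e) hte
        rw [map_smul, map_smul, smul_eq_mul, abs_mul, abs_of_pos htpos] at this
        rw [Real.norm_eq_abs]
        rw [ht] at this
        calc |f (A e)| = (M / ‖(e : E)‖ * |f (A e)|) * (‖(e : E)‖ / M) := by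
              field_simp
          _ ≤ u * (‖(e : E)‖ / M) := by
              gcongr
          _ = u / M * ‖(e : E)‖ := by ring
    -- build estar extending e ↦ f (A e)
    set ℓ : D →L[ℝ] ℝ :=
      LinearMap.mkContinuous (f.toLinearMap.comp A) (u / M) hbound with hℓ
    have h_e : ∀ x : D, ‖x‖ ≤ (1 : NNReal) * ‖D.subtypeL x‖ := by
      intro x; simp [Submodule.coe_norm]
    have h_dense : DenseRange D.subtypeL := by
      have : Set.range (D.subtypeL) = (D : Set E) := Subtype.range_coe
      rw [DenseRange, this]; exact hD
    set estar : E →L[ℝ] ℝ :=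
      ℓ.extend D.subtypeL with hestar
    have hestar_eq : ∀ e : D, estar (e : E) = f (A e) := by
      intro e
      have := ContinuousLinearMap.extend_eq (f := ℓ) (e := D.subtypeL) h_dense
        (ContinuousLinearMap.isUniformEmbedding_of_bound _ h_e).isUniformInducing e
      exact this
    have hestar_norm : ‖estar‖ ≤ u / M := by
      have h1 := ContinuousLinearMap.opNorm_extend_le (f := ℓ) (e := D.subtypeL) h_dense h_e
      have h2 : ‖ℓ‖ ≤ u / M :=
        LinearMap.mkContinuous_norm_le _ (div_nonneg hu.le hMpos.le) hbound
      calc ‖estar‖ ≤ (1 : NNReal) * ‖ℓ‖ := h1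
        _ = ‖ℓ‖ := by simp
        _ ≤ u / M := h2
    obtain ⟨fstar, hadj, hfsnorm⟩ := hsolv estar ⟨f, fun e => hestar_eq e⟩
    -- f and fstar agree on range A, hence on its closure
    have hagree : ∀ z ∈ closure (Set.range A), f z = fstar z := by
      have : Set.EqOn (⇑f) (⇑fstar) (closure (Set.range A)) := by
        refine Set.EqOn.closure ?_ f.continuous fstar.continuous
        rintro z ⟨e, rfl⟩
        rw [← hestar_eq e, hadj e]
      exact this
    have hfy' : f y = fstar y := hagree y hy
    have : u < fstar y := by rw [← hfy']; exact hfy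
    have hcontra : fstar y ≤ u := by
      calc fstar y ≤ ‖fstar y‖ := le_abs_self _
        _ ≤ ‖fstar‖ * ‖y‖ := fstar.le_opNorm y
        _ ≤ C * ‖estar‖ * ‖y‖ := by gcongr
        _ ≤ C * (u / M) * ‖y‖ := by gcongr
        _ = u := by rw [hM]; field_simp
    linarith
  -- conclusion from y ∈ K
  rw [hK, Metric.mem_closure_iff] at hyK
  obtain ⟨z, hz, hdz⟩ := hyK ε hε
  obtain ⟨e, heS, rfl⟩ := hz
  exact ⟨e, heS, by rwa [← dist_eq_norm]⟩

/-- Backward direction: bounded solvability implies closed range. -/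
theorem backward_dir [CompleteSpace E] [CompleteSpace F]
    (D : Submodule ℝ E) (hD : Dense (D : Set E)) (A : D →ₗ[ℝ] F)
    (hclosed : IsClosed {p : E × F | ∃ e : D, (e : E) = p.1 ∧ A e = p.2})
    {C : ℝ} (hC : 0 < C)
    (hsolv : ∀ estar : E →L[ℝ] ℝ,
        (∃ fstar : F →L[ℝ] ℝ, IsAdjointPair D A fstar estar) →
        ∃ fstar : F →L[ℝ] ℝ, IsAdjointPair D A fstar estar ∧ ‖fstar‖ ≤ C * ‖estar‖) :
    IsClosed (Set.range A) := by
  classical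
  refine isClosed_of_closure_subset ?_
  intro y hy
  have hstep : ∀ z : F, z ∈ closure (Set.range A) →
      ∃ e : D, ‖(e : E)‖ ≤ C * ‖z‖ ∧ ‖z - A e‖ ≤ ‖z‖ / 2 := by
    intro z hz
    rcases eq_or_ne z 0 with rfl | hz0
    · exact ⟨0, by simp, by simp⟩
    · have hzn : 0 < ‖z‖ := norm_pos_iff.mpr hz0
      obtain ⟨e, h1, h2⟩ := approx D hD A hC hsolv hz (half_pos hzn)
      exact ⟨e, h1, h2.le⟩
  choose! step hstep1 hstep2 using hstep
  have hsub : ∀ z ∈ closure (Set.range A), ∀ e : D, z - A e ∈ closure (Set.range A) := by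
    intro z hz e
    have h1 : closure (Set.range A) = ((LinearMap.range A).topologicalClosure : Set F) := by
      rw [Submodule.topologicalClosure_coe, LinearMap.coe_range]
    rw [h1] at hz ⊢
    exact Submodule.sub_mem _ hz (Submodule.le_topologicalClosure _ ⟨e, rfl⟩)
  -- residual sequence
  set w : ℕ → F := fun n => Nat.rec y (fun _ z => z - A (step z)) n with hw
  have hw0 : w 0 = y := rfl
  have hwsucc : ∀ n, w (n + 1) = w n - A (step (w n)) := fun n => rfl
  have hwmem : ∀ n, w n ∈ closure (Set.range A) := by
    intro n
    induction n with
    | zero => exact hy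
    | succ n ih => rw [hwsucc]; exact hsub _ ih _
  have hwnorm : ∀ n, ‖w n‖ ≤ ‖y‖ / 2 ^ n := by
    intro n
    induction n with
    | zero => rw [hw0]; simp
    | succ n ih =>
        rw [hwsucc]
        calc ‖w n - A (step (w n))‖ ≤ ‖w n‖ / 2 := hstep2 _ (hwmem n)
          _ ≤ ‖y‖ / 2 ^ n / 2 := by linarith
          _ = ‖y‖ / 2 ^ (n + 1) := by ring
  set eSeq : ℕ → D := fun n => step (w n) with heSeq
  have henorm : ∀ n, ‖(eSeq n : E)‖ ≤ C * ‖y‖ * (1 / 2) ^ n := by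
    intro n
    calc ‖(eSeq n : E)‖ ≤ C * ‖w n‖ := hstep1 _ (hwmem n)
      _ ≤ C * (‖y‖ / 2 ^ n) := by gcongr; exact hwnorm n
      _ = C * ‖y‖ * (1 / 2) ^ n := by rw [div_pow, one_pow]; ring
  have hsummable : Summable fun n => ((eSeq n : E)) :=
    Summable.of_norm_bounded (summable_geometric_two.mul_left (C * ‖y‖)) henorm
  set x : E := ∑' n, ((eSeq n : E)) with hx
  have hxlim : Filter.Tendsto (fun n => ∑ i ∈ Finset.range n, ((eSeq i : E)))
      Filter.atTop (nhds x) := hsummable.hasSum.tendsto_sum_nat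
  set s : ℕ → D := fun n => ∑ i ∈ Finset.range n, eSeq i with hs
  have hscoe : ∀ n, ((s n : D) : E) = ∑ i ∈ Finset.range n, ((eSeq i : E)) := by
    intro n; simp [hs]
  have hAs : ∀ n, A (s n) = y - w n := by
    intro n
    induction n with
    | zero => simp [hs, hw0]
    | succ n ih =>
        have : s (n + 1) = s n + eSeq n := by
          simp [hs, Finset.sum_range_succ]
        rw [this, map_add, ih, hwsucc]
        abel
  have hwlim : Filter.Tendsto w Filter.atTop (nhds 0) := by
    refine squeeze_zero_norm hwnorm ?_
    have h2 : Filter.Tendsto (fun n : ℕ => ‖y‖ * (1 / 2) ^ n) Filter.atTop (nhds 0) := by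
      have := tendsto_pow_atTop_nhds_zero_of_lt_one
        (by norm_num : (0:ℝ) ≤ 1 / 2) (by norm_num : (1:ℝ) / 2 < 1)
      simpa using this.const_mul ‖y‖
    refine h2.congr fun n => ?_
    rw [div_pow, one_pow]; ring
  have hAslim : Filter.Tendsto (fun n => A (s n)) Filter.atTop (nhds y) := by
    have : Filter.Tendsto (fun n => y - w n) Filter.atTop (nhds (y - 0)) :=
      tendsto_const_nhds.sub hwlim
    rw [sub_zero] at this
    exact this.congr fun n => (hAs n).symm
  have hslim : Filter.Tendsto (fun n => ((s n : D) : E)) Filter.atTop (nhds x) := by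
    refine hxlim.congr fun n => (hscoe n).symm
  have hmem : (x, y) ∈ {p : E × F | ∃ e : D, (e : E) = p.1 ∧ A e = p.2} := by
    refine hclosed.mem_of_tendsto (hslim.prodMk_nhds hAslim) ?_
    exact Filter.Eventually.of_forall fun n => ⟨s n, rfl, rfl⟩
  obtain ⟨e, -, he2⟩ := hmem
  exact ⟨e, he2⟩


/-- Let `A : D(A) ⊆ E → F` be a closed densely defined operator between
real Banach spaces, with adjoint `A* : D(A*) ⊆ F* → E*`.  Then `A(D(A))` is closed in `F`
iff there is `C > 0` such that every `e* ∈ A*(D(A*))` has a preimage `f* ∈ D(A*)` with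
`A* f* = e*` and `‖f*‖ ≤ C ‖e*‖`. -/
theorem closed_range_iff_bounded_solvability_adjoint
    [CompleteSpace E] [CompleteSpace F]
    (D : Submodule ℝ E) (hD : Dense (D : Set E))
    (A : D →ₗ[ℝ] F)
    (hclosed : IsClosed {p : E × F | ∃ e : D, (e : E) = p.1 ∧ A e = p.2}) :
    IsClosed (Set.range A) ↔
      ∃ C : ℝ, 0 < C ∧ ∀ estar : E →L[ℝ] ℝ,
        (∃ fstar : F →L[ℝ] ℝ, IsAdjointPair D A fstar estar) →
        ∃ fstar : F →L[ℝ] ℝ, IsAdjointPair D A fstar estar ∧ ‖fstar‖ ≤ C * ‖estar‖ := by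
  constructor
  · intro hR
    exact forward_dir D A hclosed hR
  · rintro ⟨C, hC, hsolv⟩
    exact backward_dir D hD A hclosed hC hsolv

end Stmt2
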